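/- There exists a strongly separately continuous function f : ℓ∞ → [0,1] that is of Baire class 3 but not of Baire class 2 on ℓ∞: f is a pointwise limit of a sequence of Baire class 2 functions, but f is not a pointwise limit of any sequence of Baire class 1 functions. (The instance α = 2 of the main theorem; the indicator function of the set A₂ = ⋃_{m} ⋂_{n≥m} π_{Tₙ}⁻¹(B₁ⁿ), for any partition (Tₙ) of ℕ into infinite sets, is such a function.) -/

import Mathlib

open BoundedContinuousFunction Filter

/-- `f : ℓ∞ → ℝ` is strongly separately continuous: at each point `x₀`, for each
coordinate `k` and each `ε > 0` there is `δ > 0` such that whenever `‖x - x₀‖ < δ`,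
the value of `f` at `x` and at the point `z` obtained from `x` by replacing the `k`-th
coordinate with `x₀ k` differ by less than `ε`. -/
def SSC (f : (ℕ →ᵇ ℝ) → ℝ) : Prop :=
  ∀ (x₀ : ℕ →ᵇ ℝ) (k : ℕ), ∀ ε > (0 : ℝ), ∃ δ > (0 : ℝ), ∀ x : ℕ →ᵇ ℝ, ‖x - x₀‖ < δ →
    ∀ z : ℕ →ᵇ ℝ, z k = x₀ k → (∀ j ≠ k, z j = x j) → |f x - f z| < ε

/-- `f` is of Baire class 1: a pointwise limit of a sequence of continuous functions. -/
def BaireOne (f : (ℕ →ᵇ ℝ) → ℝ) : Prop :=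
  ∃ g : ℕ → (ℕ →ᵇ ℝ) → ℝ, (∀ n, Continuous (g n)) ∧
    ∀ x, Tendsto (fun n => g n x) atTop (nhds (f x))

/-- `f` is of Baire class 2: a pointwise limit of a sequence of Baire class 1 functions. -/
def BaireTwo (f : (ℕ →ᵇ ℝ) → ℝ) : Prop :=
  ∃ g : ℕ → (ℕ →ᵇ ℝ) → ℝ, (∀ n, BaireOne (g n)) ∧
    ∀ x, Tendsto (fun n => g n x) atTop (nhds (f x))

namespace SB

noncomputable section
open Classical

abbrev E := ℕ →ᵇ ℝ

def pe (i j : ℕ) : ℕ := Nat.pair i (2*j)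
def po (i j : ℕ) : ℕ := Nat.pair i (2*j+1)

lemma pe_inj {i j i' j' : ℕ} : pe i j = pe i' j' ↔ i = i' ∧ j = j' := by
  constructor
  · intro h
    rcases Nat.pair_eq_pair.1 h with ⟨h1, h2⟩
    exact ⟨h1, by omega⟩
  · rintro ⟨rfl, rfl⟩; rfl

lemma po_inj {i j i' j' : ℕ} : po i j = po i' j' ↔ i = i' ∧ j = j' := by
  constructor
  · intro h
    rcases Nat.pair_eq_pair.1 h with ⟨h1, h2⟩
    exact ⟨h1, by omega⟩
  · rintro ⟨rfl, rfl⟩; rfl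

lemma pe_ne_po {i j i' j' : ℕ} : pe i j ≠ po i' j' := by
  intro h
  rcases Nat.pair_eq_pair.1 h with ⟨_, h2⟩
  omega

lemma lt_pe {k i j : ℕ} (h : k < j) : k < pe i j :=
  lt_of_lt_of_le (by omega) (Nat.right_le_pair i (2*j))

lemma lt_po {k i j : ℕ} (h : k < j) : k < po i j :=
  lt_of_lt_of_le (by omega) (Nat.right_le_pair i (2*j+1))

def D (x : E) (i j : ℕ) : ℝ := |x (pe i j) - x (po i j)|

lemma D_nonneg (x : E) (i j : ℕ) : 0 ≤ D x i j := abs_nonneg _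

lemma D_le_D_add (x y : E) (i j : ℕ) : D x i j ≤ D y i j + 2 * dist x y := by
  have h1 : dist (x (pe i j)) (y (pe i j)) ≤ dist x y := dist_coe_le_dist _
  have h2 : dist (x (po i j)) (y (po i j)) ≤ dist x y := dist_coe_le_dist _
  rw [Real.dist_eq] at h1 h2
  unfold D
  have : x (pe i j) - x (po i j) =
      (y (pe i j) - y (po i j)) + ((x (pe i j) - y (pe i j)) - (x (po i j) - y (po i j))) := by ring
  calc |x (pe i j) - x (po i j)|
      ≤ |y (pe i j) - y (po i j)| + (|x (pe i j) - y (pe i j)| + |x (po i j) - y (po i j)|) := by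
        rw [this]; exact (abs_add_le _ _).trans (by gcongr; exact abs_sub _ _)
    _ ≤ |y (pe i j) - y (po i j)| + 2 * dist x y := by linarith

def U (i : ℕ) : Set E := {x | ∃ ε > 0, ∀ J, ∃ j, J ≤ j ∧ ε ≤ D x i j}

def A : Set E := {x | ∃ m, ∀ i, m ≤ i → x ∈ U i}

def lam (i : ℕ) : ℝ := (1/2)^i

lemma lam_pos (i : ℕ) : 0 < lam i := pow_pos (by norm_num) i

def X0 : Set E := {x | ∀ i, ∀ ε > 0, ∃ J, ∀ j, J ≤ j → D x i j ≤ lam i + ε}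

def Fr (R : Finset (ℕ×ℕ)) : Set E :=
  {x | ∀ p ∈ R, ∀ j, p.2 ≤ j → x (pe p.1 j) = x (po p.1 j)}

def Cond (c : E) (δ : ℝ) (R : Finset (ℕ×ℕ)) : Set E :=
  Metric.closedBall c δ ∩ X0 ∩ Fr R

def Valid (c : E) (δ : ℝ) (R : Finset (ℕ×ℕ)) : Prop := 0 < δ ∧ c ∈ X0 ∧ c ∈ Fr R

lemma isOpen_U (i : ℕ) : IsOpen (U i) := by
  rw [Metric.isOpen_iff]
  rintro x ⟨ε, hε, hx⟩
  refine ⟨ε/4, by linarith, fun y hy => ?_⟩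
  refine ⟨ε/2, by linarith, fun J => ?_⟩
  obtain ⟨j, hj, hDx⟩ := hx J
  refine ⟨j, hj, ?_⟩
  have := D_le_D_add x y i j
  have hd : dist y x < ε/4 := hy
  rw [dist_comm] at hd
  linarith

lemma isClosed_X0 : IsClosed X0 := by
  apply isClosed_of_closure_subset
  intro x hx i ε hε
  obtain ⟨y, hyX, hxy⟩ := Metric.mem_closure_iff.1 hx (ε/4) (by positivity)
  obtain ⟨J, hJ⟩ := hyX i (ε/2) (by positivity)
  refine ⟨J, fun j hj => ?_⟩
  have := D_le_D_add x y i j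
  have := hJ j hj
  linarith

lemma isClosed_Fr (R : Finset (ℕ×ℕ)) : IsClosed (Fr R) := by
  have : Fr R = ⋂ p ∈ (R : Set (ℕ×ℕ)), ⋂ j,
      {x : E | p.2 ≤ j → x (pe p.1 j) = x (po p.1 j)} := by
    ext x; simp [Fr]
  rw [this]
  refine isClosed_biInter fun p _ => isClosed_iInter fun j => ?_
  by_cases h : p.2 ≤ j
  · simp only [h, forall_true_left]
    exact isClosed_eq (continuous_eval_const (x := pe p.1 j)) (continuous_eval_const (x := po p.1 j))
  · have : {x : E | p.2 ≤ j → x (pe p.1 j) = x (po p.1 j)} = Set.univ := by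
      ext x; simp [h]
    rw [this]; exact isClosed_univ

lemma isClosed_Cond (c : E) (δ : ℝ) (R : Finset (ℕ×ℕ)) : IsClosed (Cond c δ R) :=
  (Metric.isClosed_closedBall.inter isClosed_X0).inter (isClosed_Fr R)

lemma center_mem {c : E} {δ : ℝ} {R : Finset (ℕ×ℕ)} (h : Valid c δ R) : c ∈ Cond c δ R :=
  ⟨⟨Metric.mem_closedBall_self h.1.le, h.2.1⟩, h.2.2⟩

lemma notmem_U_iff {x : E} {i : ℕ} :
    x ∉ U i ↔ ∀ ε > 0, ∃ J, ∀ j, J ≤ j → D x i j < ε := by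
  constructor
  · intro h ε hε
    by_contra hc
    push_neg at hc
    exact h ⟨ε, hε, fun J => by
      obtain ⟨j, hj, hD⟩ := hc J; exact ⟨j, hj, hD⟩⟩
  · rintro h ⟨ε, hε, hx⟩
    obtain ⟨J, hJ⟩ := h ε hε
    obtain ⟨j, hj, hD⟩ := hx J
    exact absurd hD (not_le.2 (hJ j hj))

/-- surgery helper -/
def mkE (g : ℕ → ℝ) (C : ℝ) (h : ∀ n, |g n| ≤ C) : E :=
  BoundedContinuousFunction.ofNormedAddCommGroup g continuous_of_discreteTopology C
    (by simpa using h)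

@[simp] lemma mkE_apply (g : ℕ → ℝ) (C : ℝ) (h : ∀ n, |g n| ≤ C) (n : ℕ) :
    mkE g C h n = g n := rfl


section Surgery

/-- Density of `U i` in a condition, for a non-frozen row `i`. -/
lemma dense_U {c : E} {δ : ℝ} {R : Finset (ℕ×ℕ)} (hV : Valid c δ R)
    {i : ℕ} (hi : i ∉ R.image Prod.fst) {y : E} (hy : y ∈ Cond c δ R) {r : ℝ} (hr : 0 < r) :
    ∃ x ∈ Cond c δ R, x ∈ U i ∧ dist x y < r := by
  by_cases hyU : y ∈ U i
  · exact ⟨y, hy, hyU, by simpa [dist_self] using hr⟩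
  obtain ⟨⟨hyb, hyX⟩, hyF⟩ := hy
  have hδ : 0 < δ := hV.1
  set a : ℝ := min (min r δ) (lam i) / 2 with ha
  have ha0 : 0 < a := by
    have := lam_pos i
    apply div_pos _ (by norm_num)
    exact lt_min (lt_min hr hδ) this
  have har : a ≤ r / 2 := by
    have : min (min r δ) (lam i) ≤ r := le_trans (min_le_left _ _) (min_le_left _ _)
    simp only [ha]; linarith
  have haδ : a ≤ δ := by
    have : min (min r δ) (lam i) ≤ δ := le_trans (min_le_left _ _) (min_le_right _ _)
    simp only [ha]; linarith
  have hal : a ≤ lam i / 2 := by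
    have : min (min r δ) (lam i) ≤ lam i := min_le_right _ _
    simp only [ha]; linarith
  obtain ⟨J, hJ⟩ := notmem_U_iff.1 hyU (a/2) (by linarith)
  -- the perturbation
  set pert : ℕ → ℝ := fun n =>
    if (∃ j, J ≤ j ∧ n = pe i j) then (if c n ≤ y n then -a else a) else 0 with hpert
  have hpb : ∀ n, |pert n| ≤ a := by
    intro n
    simp only [hpert]
    split
    · split <;> simp [abs_of_pos ha0, abs_of_neg (neg_neg_of_pos ha0), le_refl]
    · simpa using ha0.le
  set x : E := y + mkE pert a hpb with hx
  have hxco : ∀ n, x n = y n + pert n := fun n => rfl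
  -- coordinates not of the form pe i j (j ≥ J) are unchanged
  have hunch : ∀ n, (¬ ∃ j, J ≤ j ∧ n = pe i j) → x n = y n := by
    intro n hn
    rw [hxco]
    simp only [hpert, if_neg hn, add_zero]
  have hpo_unch : ∀ i' j, x (po i' j) = y (po i' j) := by
    intro i' j
    refine hunch _ ?_
    rintro ⟨j', _, hj'⟩
    exact pe_ne_po hj'.symm
  have hpe_other : ∀ i' j, i' ≠ i → x (pe i' j) = y (pe i' j) := by
    intro i' j hne
    refine hunch _ ?_
    rintro ⟨j', _, hj'⟩
    exact hne (pe_inj.1 hj'.symm).1.symm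
  have hbump : ∀ j, J ≤ j → x (pe i j) = y (pe i j) +
      (if c (pe i j) ≤ y (pe i j) then -a else a) := by
    intro j hj
    rw [hxco]
    congr 1
    exact if_pos ⟨j, hj, rfl⟩
  have key : ∀ v s : ℝ, |s| - |v| ≤ |v + s| := by
    intro v s
    have h := abs_sub_abs_le_abs_sub s (-v)
    rw [abs_neg, sub_neg_eq_add, add_comm] at h
    exact h
  -- D values on row i beyond J
  have hDrow : ∀ j, J ≤ j → a - D y i j ≤ D x i j ∧ D x i j ≤ D y i j + a := by
    intro j hj
    have h1 := hbump j hj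
    have h2 := hpo_unch i j
    unfold D
    rw [h1, h2]
    constructor
    · split
      · have heq : y (pe i j) + -a - y (po i j) = (y (pe i j) - y (po i j)) + (-a) := by ring
        rw [heq]
        have h := key (y (pe i j) - y (po i j)) (-a)
        rw [abs_neg, abs_of_pos ha0] at h
        exact h
      · have heq : y (pe i j) + a - y (po i j) = (y (pe i j) - y (po i j)) + a := by ring
        rw [heq]
        have h := key (y (pe i j) - y (po i j)) a
        rw [abs_of_pos ha0] at h
        exact h
    · split
      · have heq : y (pe i j) + -a - y (po i j) = (y (pe i j) - y (po i j)) + (-a) := by ring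
        rw [heq]
        refine (abs_add_le _ _).trans ?_
        simp [abs_of_pos ha0]
      · have heq : y (pe i j) + a - y (po i j) = (y (pe i j) - y (po i j)) + a := by ring
        rw [heq]
        refine (abs_add_le _ _).trans ?_
        simp [abs_of_pos ha0]
  have hDsame : ∀ i' j, i' ≠ i → D x i' j = D y i' j := by
    intro i' j hne
    unfold D
    rw [hpe_other i' j hne, hpo_unch i' j]
  refine ⟨x, ⟨⟨?_, ?_⟩, ?_⟩, ?_, ?_⟩
  · -- closed ball
    rw [Metric.mem_closedBall]
    rw [BoundedContinuousFunction.dist_le hδ.le]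
    intro n
    rw [Real.dist_eq]
    by_cases hn : ∃ j, J ≤ j ∧ n = pe i j
    · have hxn : x n = y n + (if c n ≤ y n then -a else a) := by
        rw [hxco]; simp only [hpert, if_pos hn]
      have hyc : |y n - c n| ≤ δ := by
        have := dist_coe_le_dist (f := y) (g := c) n
        rw [Real.dist_eq] at this
        exact this.trans (Metric.mem_closedBall.1 hyb)
      rw [hxn]
      split
      · rename_i hcy
        rw [abs_le]
        constructor
        · have : y n - c n ≥ 0 := by linarith
          linarith
        · have : y n - c n ≤ δ := (abs_le.1 hyc).2
          linarith
      · rename_i hcy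
        push_neg at hcy
        rw [abs_le]
        constructor
        · have : y n - c n ≥ -δ := (abs_le.1 hyc).1
          linarith
        · have : y n - c n < 0 := by linarith
          linarith
    · rw [hunch n hn]
      have := dist_coe_le_dist (f := y) (g := c) n
      rw [Real.dist_eq] at this
      exact this.trans (Metric.mem_closedBall.1 hyb)
  · -- X0
    intro i' ε hε
    by_cases hne : i' = i
    · subst hne
      refine ⟨J, fun j hj => ?_⟩
      have := (hDrow j hj).2
      have := hJ j hj
      have := lam_pos i'
      have : D x i' j ≤ a/2 + a := by linarith
      have h2 : (3:ℝ)/2 * a ≤ 3/2 * (lam i' / 2) := by linarith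
      linarith
    · obtain ⟨J', hJ'⟩ := hyX i' ε hε
      exact ⟨J', fun j hj => by rw [hDsame i' j hne]; exact hJ' j hj⟩
  · -- Fr
    intro p hp j hj
    have hne : p.1 ≠ i := by
      intro h
      exact hi (Finset.mem_image.2 ⟨p, hp, h⟩)
    rw [hpe_other p.1 j hne, hpo_unch p.1 j]
    exact hyF p hp j hj
  · -- U i
    refine ⟨a/2, by linarith, fun J' => ?_⟩
    refine ⟨max J J', le_max_right _ _, ?_⟩
    have h1 := (hDrow (max J J') (le_max_left _ _)).1
    have h2 := hJ (max J J') (le_max_left _ _)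
    linarith
  · -- dist
    have : dist x y ≤ a := by
      rw [BoundedContinuousFunction.dist_le ha0.le]
      intro n
      rw [Real.dist_eq, hxco]
      simpa using hpb n
    linarith

end Surgery


/-- Shrinking to a sub-condition inside a relative ball (π-base property). -/
lemma pibase {c : E} {δ : ℝ} {R : Finset (ℕ×ℕ)} (hV : Valid c δ R)
    {y : E} (hy : y ∈ Cond c δ R) {ρ : ℝ} (hρ : 0 < ρ) :
    ∃ c' δ', Valid c' δ' R ∧ δ' ≤ δ/2 ∧ Cond c' δ' R ⊆ Cond c δ R ∧
      Cond c' δ' R ⊆ Metric.ball y ρ := by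
  obtain ⟨⟨hyb, hyX⟩, hyF⟩ := hy
  have hδ : 0 < δ := hV.1
  set t : ℝ := min (ρ/(2*δ)) 1 with ht
  have ht0 : 0 < t := lt_min (by positivity) one_pos
  have ht1 : t ≤ 1 := min_le_right _ _
  have htρ : t * δ ≤ ρ/2 := by
    have h := min_le_left (ρ/(2*δ)) 1
    calc t * δ ≤ (ρ/(2*δ)) * δ := mul_le_mul_of_nonneg_right h hδ.le
      _ = ρ/2 := by field_simp
  set y' : E := c + (1-t) • (y - c) with hy'
  have hco : ∀ n, y' n = c n + (1-t) * (y n - c n) := by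
    intro n
    simp [hy']
  have hdyc : dist y' c ≤ (1-t) * δ := by
    rw [BoundedContinuousFunction.dist_le (by nlinarith)]
    intro m
    rw [Real.dist_eq, hco]
    have h1 : |y m - c m| ≤ δ := by
      have := dist_coe_le_dist (f := y) (g := c) m
      rw [Real.dist_eq] at this
      exact this.trans (Metric.mem_closedBall.1 hyb)
    have heq : c m + (1 - t) * (y m - c m) - c m = (1-t) * (y m - c m) := by ring
    rw [heq, abs_mul, abs_of_nonneg (by linarith : (0:ℝ) ≤ 1 - t)]
    nlinarith
  have hdyy : dist y' y ≤ t * δ := by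
    rw [BoundedContinuousFunction.dist_le (by nlinarith)]
    intro m
    rw [Real.dist_eq, hco]
    have h1 : |y m - c m| ≤ δ := by
      have := dist_coe_le_dist (f := y) (g := c) m
      rw [Real.dist_eq] at this
      exact this.trans (Metric.mem_closedBall.1 hyb)
    have heq : c m + (1 - t) * (y m - c m) - y m = (-t) * (y m - c m) := by ring
    rw [heq, abs_mul, abs_neg, abs_of_nonneg ht0.le]
    nlinarith
  have hDy' : ∀ i j, D y' i j ≤ t * D c i j + (1-t) * D y i j := by
    intro i j
    unfold D
    have heq : y' (pe i j) - y' (po i j) =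
        t * (c (pe i j) - c (po i j)) + (1-t) * (y (pe i j) - y (po i j)) := by
      rw [hco, hco]; ring
    rw [heq]
    refine (abs_add_le _ _).trans ?_
    rw [abs_mul, abs_mul, abs_of_nonneg ht0.le, abs_of_nonneg (by linarith : (0:ℝ) ≤ 1 - t)]
  have hy'X : y' ∈ X0 := by
    intro i ε hε
    obtain ⟨Jc, hJc⟩ := hV.2.1 i ε hε
    obtain ⟨Jy, hJy⟩ := hyX i ε hε
    refine ⟨max Jc Jy, fun j hj => ?_⟩
    have h1 := hJc j (le_trans (le_max_left _ _) hj)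
    have h2 := hJy j (le_trans (le_max_right _ _) hj)
    have h3 := hDy' i j
    nlinarith
  have hy'F : y' ∈ Fr R := by
    intro p hp j hj
    rw [hco, hco, hV.2.2 p hp j hj, hyF p hp j hj]
  refine ⟨y', t*δ/2, ⟨by positivity, hy'X, hy'F⟩, by nlinarith, ?_, ?_⟩
  · rintro x ⟨⟨hxb, hxX⟩, hxF⟩
    refine ⟨⟨?_, hxX⟩, hxF⟩
    rw [Metric.mem_closedBall]
    calc dist x c ≤ dist x y' + dist y' c := dist_triangle _ _ _
      _ ≤ t*δ/2 + (1-t)*δ := add_le_add (Metric.mem_closedBall.1 hxb) hdyc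
      _ ≤ δ := by nlinarith
  · rintro x ⟨⟨hxb, _⟩, _⟩
    rw [Metric.mem_ball]
    calc dist x y ≤ dist x y' + dist y' y := dist_triangle _ _ _
      _ ≤ t*δ/2 + t*δ := add_le_add (Metric.mem_closedBall.1 hxb) hdyy
      _ < ρ := by nlinarith

/-- Freezing a fresh high row. -/
lemma freeze {c : E} {δ : ℝ} {R : Finset (ℕ×ℕ)} (hV : Valid c δ R) (n : ℕ) :
    ∃ i J c', n ≤ i ∧ Valid c' (δ/8) (insert (i,J) R) ∧
      Cond c' (δ/8) (insert (i,J) R) ⊆ Cond c δ R := by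
  have hδ : 0 < δ := hV.1
  obtain ⟨i0, hi0⟩ := exists_pow_lt_of_lt_one (show (0:ℝ) < δ/8 by linarith)
    (show (1:ℝ)/2 < 1 by norm_num)
  set i := n + i0 with hi
  have hlami : lam i ≤ δ/8 := by
    refine le_trans ?_ hi0.le
    unfold lam
    exact pow_le_pow_of_le_one (by norm_num) (by norm_num) (Nat.le_add_left _ _)
  obtain ⟨J, hJ⟩ := hV.2.1 i (lam i) (lam_pos i)
  have hb : ∀ m, |(if h : ∃ j, J ≤ j ∧ m = pe i j then (c (po i h.choose) - c (pe i h.choose))/2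
      else if h : ∃ j, J ≤ j ∧ m = po i j then (c (pe i h.choose) - c (po i h.choose))/2
      else 0 : ℝ)| ≤ lam i := by
    intro m
    split
    · rename_i h
      obtain ⟨h1, _⟩ := h.choose_spec
      have := hJ h.choose h1
      unfold D at this
      rw [abs_div]
      rw [abs_sub_comm]
      simp only [Nat.abs_ofNat]
      linarith
    · split
      · rename_i h
        obtain ⟨h1, _⟩ := h.choose_spec
        have := hJ h.choose h1
        unfold D at this
        rw [abs_div]
        simp only [Nat.abs_ofNat]
        linarith
      · simpa using (lam_pos i).le
  set pert : ℕ → ℝ := fun m =>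
    if h : ∃ j, J ≤ j ∧ m = pe i j then (c (po i h.choose) - c (pe i h.choose))/2
    else if h : ∃ j, J ≤ j ∧ m = po i j then (c (pe i h.choose) - c (po i h.choose))/2
    else 0 with hpert
  set c' : E := c + mkE pert (lam i) hb with hc'
  have hco : ∀ m, c' m = c m + pert m := fun m => rfl
  have hpe_val : ∀ j, J ≤ j → c' (pe i j) = (c (pe i j) + c (po i j))/2 := by
    intro j hj
    rw [hco]
    have h : ∃ j', J ≤ j' ∧ pe i j = pe i j' := ⟨j, hj, rfl⟩
    simp only [hpert, dif_pos h]
    obtain ⟨-, h2⟩ := h.choose_spec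
    obtain ⟨-, h3⟩ := pe_inj.1 h2
    rw [← h3]
    ring
  have hpo_val : ∀ j, J ≤ j → c' (po i j) = (c (pe i j) + c (po i j))/2 := by
    intro j hj
    rw [hco]
    have h1 : ¬ ∃ j', J ≤ j' ∧ po i j = pe i j' := by
      rintro ⟨j', -, hj'⟩; exact pe_ne_po hj'.symm
    have h : ∃ j', J ≤ j' ∧ po i j = po i j' := ⟨j, hj, rfl⟩
    simp only [hpert, dif_neg h1, dif_pos h]
    obtain ⟨-, h2⟩ := h.choose_spec
    obtain ⟨-, h3⟩ := po_inj.1 h2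
    rw [← h3]
    ring
  have hunch : ∀ m, (¬ ∃ j, J ≤ j ∧ m = pe i j) → (¬ ∃ j, J ≤ j ∧ m = po i j) → c' m = c m := by
    intro m h1 h2
    rw [hco]
    simp only [hpert, dif_neg h1, dif_neg h2, add_zero]
  have hpe_other : ∀ i' j, i' ≠ i → c' (pe i' j) = c (pe i' j) := by
    intro i' j hne
    refine hunch _ ?_ ?_
    · rintro ⟨j', -, hj'⟩; exact hne (pe_inj.1 hj').1
    · rintro ⟨j', -, hj'⟩; exact pe_ne_po hj'
  have hpo_other : ∀ i' j, i' ≠ i → c' (po i' j) = c (po i' j) := by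
    intro i' j hne
    refine hunch _ ?_ ?_
    · rintro ⟨j', -, hj'⟩; exact pe_ne_po hj'.symm
    · rintro ⟨j', -, hj'⟩; exact hne (po_inj.1 hj').1
  have hlow : ∀ j, j < J → c' (pe i j) = c (pe i j) ∧ c' (po i j) = c (po i j) := by
    intro j hj
    constructor
    · refine hunch _ ?_ ?_
      · rintro ⟨j', hj', h⟩; obtain ⟨-, rfl⟩ := pe_inj.1 h; omega
      · rintro ⟨j', -, h⟩; exact pe_ne_po h
    · refine hunch _ ?_ ?_
      · rintro ⟨j', -, h⟩; exact pe_ne_po h.symm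
      · rintro ⟨j', hj', h⟩; obtain ⟨-, rfl⟩ := po_inj.1 h; omega
  have hdist : dist c' c ≤ lam i := by
    rw [BoundedContinuousFunction.dist_le (lam_pos i).le]
    intro m
    rw [Real.dist_eq, hco]
    simpa using hb m
  have hc'X : c' ∈ X0 := by
    intro i' ε hε
    by_cases hne : i' = i
    · subst hne
      refine ⟨J, fun j hj => ?_⟩
      unfold D
      rw [hpe_val j hj, hpo_val j hj]
      simp
      have := lam_pos i
      linarith [hε.le]
    · obtain ⟨J', hJ'⟩ := hV.2.1 i' ε hε
      refine ⟨J', fun j hj => ?_⟩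
      unfold D
      rw [hpe_other i' j hne, hpo_other i' j hne]
      exact hJ' j hj
  have hc'F : c' ∈ Fr (insert (i,J) R) := by
    intro p hp j hj
    rcases Finset.mem_insert.1 hp with h | h
    · subst h
      simp only at hj
      rw [hpe_val j hj, hpo_val j hj]
    · by_cases hne : p.1 = i
      · by_cases hjJ : J ≤ j
        · rw [hne, hpe_val j hjJ, hpo_val j hjJ]
        · push_neg at hjJ
          rw [hne, (hlow j hjJ).1, (hlow j hjJ).2]
          have := hV.2.2 p h j hj
          rwa [hne] at this
      · rw [hpe_other p.1 j hne, hpo_other p.1 j hne]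
        exact hV.2.2 p h j hj
  refine ⟨i, J, c', Nat.le_add_right _ _, ⟨by linarith, hc'X, hc'F⟩, ?_⟩
  rintro x ⟨⟨hxb, hxX⟩, hxF⟩
  refine ⟨⟨?_, hxX⟩, ?_⟩
  · rw [Metric.mem_closedBall]
    calc dist x c ≤ dist x c' + dist c' c := dist_triangle _ _ _
      _ ≤ δ/8 + lam i := add_le_add (Metric.mem_closedBall.1 hxb) hdist
      _ ≤ δ := by linarith
  · intro p hp j hj
    exact hxF p (Finset.mem_insert_of_mem hp) j hj


/-- The key avoidance lemma (Baire category argument). -/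
lemma avoid {c : E} {δ : ℝ} {R : Finset (ℕ×ℕ)} (hV : Valid c δ R)
    (V : ℕ → Set E) (hVo : ∀ t, IsOpen (V t)) (hGA : (⋂ t, V t) ⊆ Aᶜ) :
    ∃ c' δ', Valid c' δ' R ∧ δ' ≤ δ/2 ∧ Cond c' δ' R ⊆ Cond c δ R ∧
      ∀ x ∈ Cond c' δ' R, x ∉ ⋂ t, V t := by
  by_contra hcon
  push_neg at hcon
  -- hcon : ∀ c' δ', Valid → δ' ≤ δ/2 → ⊆ → ∃ x ∈ Cond c' δ' R, x ∈ ⋂ t, V t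
  set C : Set E := Cond c δ R with hC
  have hCc : IsClosed C := isClosed_Cond c δ R
  haveI : Nonempty C := ⟨⟨c, center_mem hV⟩⟩
  haveI := hCc.completeSpace_coe
  haveI : BaireSpace C := inferInstance
  set U' : ℕ → Set E := fun i => if i ∈ R.image Prod.fst then Set.univ else U i with hU'
  set Fam : ℕ ⊕ ℕ → Set C := fun s =>
    Sum.elim (fun m => Subtype.val ⁻¹' (V m)) (fun i => Subtype.val ⁻¹' (U' i)) s with hFam
  have hopen : ∀ s, IsOpen (Fam s) := by
    rintro (m | i)
    · exact (hVo m).preimage continuous_subtype_val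
    · simp only [hFam, hU', Sum.elim_inr]
      split
      · rw [Set.preimage_univ]; exact isOpen_univ
      · exact (isOpen_U i).preimage continuous_subtype_val
  have hdense : ∀ s, Dense (Fam s) := by
    rintro (m | i)
    · rw [Metric.dense_iff]
      intro y r hr
      obtain ⟨c₁, δ₁, hv₁, hhalf, hsub₁, hball⟩ := pibase hV y.2 hr
      obtain ⟨x, hxC₁, hxG⟩ := hcon c₁ δ₁ hv₁ hhalf hsub₁
      refine ⟨⟨x, hsub₁ hxC₁⟩, ?_, ?_⟩
      · rw [Metric.mem_ball, Subtype.dist_eq]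
        exact hball hxC₁
      · simp only [hFam, Sum.elim_inl, Set.mem_preimage]
        exact Set.mem_iInter.1 hxG m
    · simp only [hFam, hU', Sum.elim_inr]
      split
      · rw [Set.preimage_univ]; exact dense_univ
      · rename_i hi
        rw [Metric.dense_iff]
        intro y r hr
        obtain ⟨x, hxC, hxU, hxd⟩ := dense_U hV hi y.2 hr
        refine ⟨⟨x, hxC⟩, ?_, hxU⟩
        rw [Metric.mem_ball, Subtype.dist_eq]
        exact hxd
  have hd := dense_iInter_of_isOpen hopen hdense
  obtain ⟨⟨x, hxC⟩, hx⟩ := hd.nonempty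
  have hxV : x ∈ ⋂ t, V t := by
    rw [Set.mem_iInter]
    intro m
    have := Set.mem_iInter.1 hx (Sum.inl m)
    simpa [hFam] using this
  have hxU : ∀ i, i ∉ R.image Prod.fst → x ∈ U i := by
    intro i hi
    have := Set.mem_iInter.1 hx (Sum.inr i)
    simp only [hFam, hU', Sum.elim_inr, Set.mem_preimage] at this
    rwa [if_neg hi] at this
  have hxA : x ∉ A := hGA hxV
  apply hxA
  refine ⟨(R.sup Prod.fst) + 1, fun i hi => ?_⟩
  apply hxU
  intro hmem
  obtain ⟨p, hp, hpi⟩ := Finset.mem_image.1 hmem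
  have := Finset.le_sup (f := Prod.fst) hp
  omega


/-! ### The function `f` and the upper bound -/

def ind (S : Set E) : E → ℝ := fun x => if x ∈ S then 1 else 0

def f : E → ℝ := ind A

def Q (m : ℕ) : Set E := {x | ∀ i, m ≤ i → x ∈ U i}

def Vf (m K : ℕ) : Set E := {x | ∀ i, m ≤ i → i ≤ m + K → x ∈ U i}

lemma isOpen_Vf (m K : ℕ) : IsOpen (Vf m K) := by
  have : Vf m K = ⋂ i ∈ Finset.Icc m (m+K), U i := by
    ext x
    simp only [Vf, Set.mem_setOf_eq, Set.mem_iInter, Finset.mem_Icc]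
    constructor
    · intro h i hi
      exact h i hi.1 hi.2
    · intro h i h1 h2
      exact h i ⟨h1, h2⟩
  rw [this]
  exact isOpen_biInter_finset fun i _ => isOpen_U i

lemma zero_not_U (i : ℕ) : (0:E) ∉ U i := by
  rintro ⟨ε, hε, h⟩
  obtain ⟨j, -, hD⟩ := h 0
  have : D (0:E) i j = 0 := by unfold D; simp
  rw [this] at hD
  linarith

lemma zero_not_Vf (m K : ℕ) : (0:E) ∉ Vf m K := by
  intro h
  exact zero_not_U m (h m le_rfl (by omega))

lemma baireOne_ind_open (W : Set E) (hW : IsOpen W) (hne : Wᶜ.Nonempty) :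
    BaireOne (ind W) := by
  refine ⟨fun n x => min 1 ((n:ℝ) * Metric.infDist x Wᶜ), fun n => ?_, fun x => ?_⟩
  · exact continuous_const.min (continuous_const.mul (Metric.continuous_infDist_pt _))
  · by_cases hx : x ∈ W
    · have hd : 0 < Metric.infDist x Wᶜ :=
        (hW.isClosed_compl.notMem_iff_infDist_pos hne).1 (by simpa)
      have hev : ∀ᶠ n : ℕ in atTop, min 1 ((n:ℝ) * Metric.infDist x Wᶜ) = 1 := by
        rw [eventually_atTop]
        refine ⟨⌈1/Metric.infDist x Wᶜ⌉₊, fun n hn => ?_⟩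
        apply min_eq_left
        have h1 : 1/Metric.infDist x Wᶜ ≤ (n:ℝ) :=
          le_trans (Nat.le_ceil _) (Nat.cast_le.2 hn)
        rw [div_le_iff₀ hd] at h1
        linarith
      have : ind W x = 1 := if_pos hx
      rw [this]
      exact Tendsto.congr' (hev.mono fun n h => h.symm) tendsto_const_nhds
    · have hd : Metric.infDist x Wᶜ = 0 := Metric.infDist_zero_of_mem (by simpa)
      have : ind W x = 0 := if_neg hx
      rw [this]
      have : ∀ n : ℕ, min 1 ((n:ℝ) * Metric.infDist x Wᶜ) = 0 := by
        intro n; rw [hd, mul_zero]; exact min_eq_right zero_le_one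
      simp only [this]
      exact tendsto_const_nhds
lemma baireTwo_ind_Q (m : ℕ) : BaireTwo (ind (Q m)) := by
  refine ⟨fun K => ind (Vf m K), fun K =>
    baireOne_ind_open _ (isOpen_Vf m K) ⟨0, zero_not_Vf m K⟩, fun x => ?_⟩
  by_cases hx : x ∈ Q m
  · have h1 : ∀ K, ind (Vf m K) x = 1 := fun K => if_pos (fun i hi _ => hx i hi)
    have h2 : ind (Q m) x = 1 := if_pos hx
    rw [h2]; simp only [h1]; exact tendsto_const_nhds
  · have h2 : ind (Q m) x = 0 := if_neg hx
    rw [h2]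
    simp only [Q, Set.mem_setOf_eq] at hx
    push_neg at hx
    obtain ⟨i₀, hi₀, hU₀⟩ := hx
    have hev : ∀ᶠ K in atTop, (fun _ : ℕ => (0:ℝ)) K = ind (Vf m K) x := by
      rw [eventually_atTop]
      refine ⟨i₀ - m, fun K hK => ?_⟩
      symm
      apply if_neg
      intro h
      exact hU₀ (h i₀ hi₀ (by omega))
    exact Tendsto.congr' hev tendsto_const_nhds

lemma tendsto_ind_Q_f (x : E) : Tendsto (fun m => ind (Q m) x) atTop (nhds (f x)) := by
  by_cases hx : x ∈ A
  · have hf : f x = 1 := if_pos hx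
    obtain ⟨m₀, hm₀⟩ := hx
    rw [hf]
    have hev : ∀ᶠ m in atTop, (fun _ : ℕ => (1:ℝ)) m = ind (Q m) x := by
      rw [eventually_atTop]
      refine ⟨m₀, fun m hm => ?_⟩
      symm
      exact if_pos (fun i hi => hm₀ i (le_trans hm hi))
    exact Tendsto.congr' hev tendsto_const_nhds
  · have hf : f x = 0 := if_neg hx
    rw [hf]
    have : ∀ m, ind (Q m) x = 0 := by
      intro m
      apply if_neg
      intro h
      exact hx ⟨m, h⟩
    simp only [this]
    exact tendsto_const_nhds

/-! ### Invariance and SSC -/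

lemma U_invariant {x z : E} {k : ℕ} (h : ∀ n, n ≠ k → x n = z n) (i : ℕ)
    (hx : x ∈ U i) : z ∈ U i := by
  obtain ⟨ε, hε, hU⟩ := hx
  refine ⟨ε, hε, fun J => ?_⟩
  obtain ⟨j, hj, hD⟩ := hU (max J (k+1))
  refine ⟨j, le_trans (le_max_left _ _) hj, ?_⟩
  have hk : k < j := lt_of_lt_of_le (Nat.lt_succ_self k) (le_trans (le_max_right _ _) hj)
  have h1 : x (pe i j) = z (pe i j) := h _ (Nat.ne_of_gt (lt_pe hk))
  have h2 : x (po i j) = z (po i j) := h _ (Nat.ne_of_gt (lt_po hk))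
  unfold D at hD ⊢
  rwa [← h1, ← h2]

lemma f_invariant {x z : E} {k : ℕ} (h : ∀ n, n ≠ k → x n = z n) : f x = f z := by
  have hsymm : ∀ n, n ≠ k → z n = x n := fun n hn => (h n hn).symm
  have hA : x ∈ A ↔ z ∈ A := by
    constructor
    · rintro ⟨m, hm⟩
      exact ⟨m, fun i hi => U_invariant h i (hm i hi)⟩
    · rintro ⟨m, hm⟩
      exact ⟨m, fun i hi => U_invariant hsymm i (hm i hi)⟩
  unfold f ind
  by_cases hx : x ∈ A
  · rw [if_pos hx, if_pos (hA.1 hx)]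
  · rw [if_neg hx, if_neg (fun hz => hx (hA.2 hz))]

lemma ssc_f : SSC f := by
  intro x₀ k ε hε
  refine ⟨1, one_pos, fun x _ z hzk hzj => ?_⟩
  have : f x = f z := f_invariant (fun n hn => (hzj n hn).symm)
  rw [this, sub_self, abs_zero]
  exact hε


/-! ### The lower bound: `f` is not a pointwise limit of Baire-1 functions -/

lemma not_baire_limit :
    ¬ (∃ g : ℕ → (ℕ →ᵇ ℝ) → ℝ, (∀ n, BaireOne (g n)) ∧
        ∀ x, Tendsto (fun n => g n x) atTop (nhds (f x))) := by
  rintro ⟨g, hg1, hglim⟩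
  choose H Hcont Hlim using hg1
  set W : ℕ → ℕ → ℕ → Set E := fun n k N' =>
    {x | ∃ m, N' ≤ m ∧ H n m x < 1/2 + 1/((k:ℝ)+1)} with hW
  have hWo : ∀ n k N', IsOpen (W n k N') := by
    intro n k N'
    have : W n k N' = ⋃ m, ⋃ (_ : N' ≤ m), (H n m) ⁻¹' (Set.Iio (1/2 + 1/((k:ℝ)+1))) := by
      ext x; simp [hW]
    rw [this]
    exact isOpen_iUnion fun m => isOpen_iUnion fun _ =>
      (isOpen_Iio).preimage (Hcont n m)
  set G : ℕ → Set E := fun N => {x | ∀ n, N ≤ n → g n x ≤ 1/2} with hG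
  set VV : ℕ → ℕ → Set E := fun N t =>
    W (N + (Nat.unpair t).1) (Nat.unpair (Nat.unpair t).2).1 (Nat.unpair (Nat.unpair t).2).2
    with hVV
  have hGV : ∀ N, G N = ⋂ t, VV N t := by
    intro N
    ext x
    constructor
    · intro hx
      rw [Set.mem_iInter]
      intro t
      simp only [hVV]
      set n := N + (Nat.unpair t).1
      set k := (Nat.unpair (Nat.unpair t).2).1
      set N' := (Nat.unpair (Nat.unpair t).2).2
      have hgn : g n x ≤ 1/2 := hx n (Nat.le_add_right _ _)
      have hlt : g n x < 1/2 + 1/((k:ℝ)+1) := by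
        have : (0:ℝ) < 1/((k:ℝ)+1) := by positivity
        linarith
      have hev : ∀ᶠ m in atTop, H n m x < 1/2 + 1/((k:ℝ)+1) :=
        (Hlim n x).eventually (eventually_lt_nhds hlt)
      obtain ⟨m, hm1, hm2⟩ := (hev.and (eventually_ge_atTop N')).exists
      exact ⟨m, hm2, hm1⟩
    · intro hx n hn
      by_contra hgt
      push_neg at hgt
      obtain ⟨k, hk⟩ := exists_nat_one_div_lt (by linarith : (0:ℝ) < g n x - 1/2)
      have hlt : 1/2 + 1/((k:ℝ)+1) < g n x := by
        push_cast at hk ⊢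
        linarith
      have hev : ∀ᶠ m in atTop, 1/2 + 1/((k:ℝ)+1) < H n m x :=
        (Hlim n x).eventually (eventually_gt_nhds hlt)
      obtain ⟨N', hN'⟩ := eventually_atTop.1 hev
      have ht := Set.mem_iInter.1 hx (Nat.pair (n - N) (Nat.pair k N'))
      simp only [hVV, Nat.unpair_pair] at ht
      rw [show N + (n - N) = n by omega] at ht
      obtain ⟨m, hm1, hm2⟩ := ht
      exact absurd hm2 (not_lt.2 (hN' m hm1).le)
  have hGA : ∀ N, G N ⊆ Aᶜ := by
    intro N x hx
    have hle : f x ≤ 1/2 := le_of_tendsto (hglim x)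
      (eventually_atTop.2 ⟨N, fun n hn => hx n hn⟩)
    intro hA
    have : f x = 1 := if_pos hA
    rw [this] at hle
    norm_num at hle
  have hcover : ∀ x, x ∉ A → ∃ N, x ∈ G N := by
    intro x hx
    have hf : f x = 0 := if_neg hx
    have := hglim x
    rw [hf] at this
    have hev : ∀ᶠ n in atTop, g n x < 1/2 :=
      this.eventually (eventually_lt_nhds (by norm_num : (0:ℝ) < 1/2))
    obtain ⟨N, hN⟩ := eventually_atTop.1 hev
    exact ⟨N, fun n hn => (hN n hn).le⟩
  -- one construction step
  have step : ∀ s : E × ℝ × Finset (ℕ×ℕ), Valid s.1 s.2.1 s.2.2 → ∀ n : ℕ,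
      ∃ s' : E × ℝ × Finset (ℕ×ℕ), Valid s'.1 s'.2.1 s'.2.2 ∧
        Cond s'.1 s'.2.1 s'.2.2 ⊆ Cond s.1 s.2.1 s.2.2 ∧
        (∀ x ∈ Cond s'.1 s'.2.1 s'.2.2, x ∉ G n) ∧ s'.2.1 ≤ s.2.1/2 ∧
        ∃ i J, n ≤ i ∧ (i,J) ∈ s'.2.2 := by
    rintro ⟨c, δ, R⟩ hV n
    obtain ⟨c₁, δ₁, hV₁, hhalf₁, hsub₁, hdisj⟩ :=
      avoid hV (VV n) (fun t => hWo _ _ _) (by rw [← hGV n]; exact hGA n)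
    obtain ⟨i, J, c₂, hin, hV₂, hsub₂⟩ := freeze hV₁ n
    refine ⟨⟨c₂, δ₁/8, insert (i,J) R⟩, hV₂, hsub₂.trans hsub₁, ?_, ?_, i, J, hin,
      Finset.mem_insert_self _ _⟩
    · intro x hx
      rw [hGV n]
      exact hdisj x (hsub₂ hx)
    · have := hV.1
      simp only
      linarith [hV₁.1]
  -- the recursive sequence of conditions
  have h0 : Valid (0:E) 1 (∅ : Finset (ℕ×ℕ)) := by
    refine ⟨one_pos, ?_, ?_⟩
    · intro i ε hε
      refine ⟨0, fun j hj => ?_⟩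
      have h1 : D (0:E) i j = 0 := by unfold D; simp
      rw [h1]
      linarith [lam_pos i]
    · intro p hp
      exact absurd hp (Finset.notMem_empty p)
  obtain ⟨F, hF0, hF⟩ : ∃ F : ℕ → {s : E × ℝ × Finset (ℕ×ℕ) // Valid s.1 s.2.1 s.2.2},
      (F 0).1 = ⟨(0:E), 1, (∅ : Finset (ℕ×ℕ))⟩ ∧ ∀ n,
      Cond (F (n+1)).1.1 (F (n+1)).1.2.1 (F (n+1)).1.2.2 ⊆
        Cond (F n).1.1 (F n).1.2.1 (F n).1.2.2 ∧
      (∀ x ∈ Cond (F (n+1)).1.1 (F (n+1)).1.2.1 (F (n+1)).1.2.2, x ∉ G n) ∧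
      (F (n+1)).1.2.1 ≤ (F n).1.2.1/2 ∧
      ∃ i J, n ≤ i ∧ (i,J) ∈ (F (n+1)).1.2.2 := by
    let F' : ℕ → {s : E × ℝ × Finset (ℕ×ℕ) // Valid s.1 s.2.1 s.2.2} :=
      fun n => Nat.rec ⟨⟨(0:E), 1, (∅ : Finset (ℕ×ℕ))⟩, h0⟩
        (fun n p => ⟨(step p.1 p.2 n).choose, ((step p.1 p.2 n).choose_spec).1⟩) n
    refine ⟨F', rfl, fun n => ?_⟩
    have hred : F' (n+1) = ⟨(step (F' n).1 (F' n).2 n).choose,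
        ((step (F' n).1 (F' n).2 n).choose_spec).1⟩ := rfl
    have h := ((step (F' n).1 (F' n).2 n).choose_spec)
    rw [hred]
    exact ⟨h.2.1, h.2.2.1, h.2.2.2.1, h.2.2.2.2⟩
  set cn : ℕ → E := fun n => (F n).1.1 with hcn
  set δn : ℕ → ℝ := fun n => (F n).1.2.1 with hδn
  set SC : ℕ → Set E := fun n => Cond (F n).1.1 (F n).1.2.1 (F n).1.2.2 with hSC
  have hδpos : ∀ n, 0 < δn n := fun n => (F n).2.1
  have hδle : ∀ n, δn n ≤ (1/2:ℝ)^n := by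
    intro n
    induction n with
    | zero =>
      have h1 : δn 0 = 1 := by simp only [hδn]; rw [hF0]
      rw [h1]; norm_num
    | succ n ih =>
      have := (hF n).2.2.1
      calc δn (n+1) ≤ δn n / 2 := this
        _ ≤ (1/2:ℝ)^n / 2 := by linarith
        _ = (1/2:ℝ)^(n+1) := by ring
  have hmono : ∀ n m, n ≤ m → SC m ⊆ SC n := by
    intro n m hnm
    induction m, hnm using Nat.le_induction with
    | base => exact subset_rfl
    | succ m hm ih => exact subset_trans (hF m).1 ih
  have hcm : ∀ n, cn n ∈ SC n := fun n => center_mem (F n).2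
  have hcauchy : CauchySeq cn := by
    apply cauchySeq_of_le_geometric (1/2 : ℝ) 1 (by norm_num)
    intro n
    have h1 : cn (n+1) ∈ SC n := hmono n (n+1) (Nat.le_succ n) (hcm (n+1))
    have h2 : dist (cn (n+1)) (cn n) ≤ δn n := Metric.mem_closedBall.1 h1.1.1
    rw [dist_comm] at h2
    calc dist (cn n) (cn (n+1)) ≤ δn n := h2
      _ ≤ (1/2:ℝ)^n := hδle n
      _ = 1 * (1/2:ℝ)^n := (one_mul _).symm
  obtain ⟨z, hz⟩ := cauchySeq_tendsto_of_complete hcauchy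
  have hzC : ∀ n, z ∈ SC n := by
    intro n
    refine (isClosed_Cond _ _ _).mem_of_tendsto hz ?_
    rw [eventually_atTop]
    exact ⟨n, fun m hm => hmono n m hm (hcm m)⟩
  have hzG : ∀ n, z ∉ G n := fun n => (hF n).2.1 z (hzC (n+1))
  have hzA : z ∉ A := by
    rintro ⟨m, hm⟩
    obtain ⟨i, J, him, hiJ⟩ := (hF m).2.2.2
    have hzU : z ∈ U i := hm i him
    obtain ⟨ε, hε, hUU⟩ := hzU
    obtain ⟨j, hj, hD⟩ := hUU J
    have hfr : z (pe i j) = z (po i j) := (hzC (m+1)).2 (i, J) hiJ j hj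
    have : D z i j = 0 := by unfold D; rw [hfr]; simp
    rw [this] at hD
    linarith
  obtain ⟨N, hN⟩ := hcover z hzA
  exact hzG N hN


lemma f_mem_Icc (x : E) : f x ∈ Set.Icc (0:ℝ) 1 := by
  unfold f ind
  split
  · exact ⟨zero_le_one, le_rfl⟩
  · exact ⟨le_rfl, zero_le_one⟩

lemma baire_three : ∃ g : ℕ → (ℕ →ᵇ ℝ) → ℝ, (∀ n, BaireTwo (g n)) ∧
    ∀ x, Tendsto (fun n => g n x) atTop (nhds (f x)) :=
  ⟨fun m => ind (Q m), fun m => baireTwo_ind_Q m, tendsto_ind_Q_f⟩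

end
end SB


/-- There is a strongly separately continuous `f : ℓ∞ → [0,1]` which is a pointwise
limit of a sequence of Baire class 2 functions (hence of Baire class 3), but is not a
pointwise limit of any sequence of Baire class 1 functions. -/
theorem exists_ssc_baire_three_not_baire_two :
    ∃ f : (ℕ →ᵇ ℝ) → ℝ,
      (∀ x, f x ∈ Set.Icc (0 : ℝ) 1) ∧
      SSC f ∧
      (∃ g : ℕ → (ℕ →ᵇ ℝ) → ℝ, (∀ n, BaireTwo (g n)) ∧
        ∀ x, Tendsto (fun n => g n x) atTop (nhds (f x))) ∧
      ¬ (∃ g : ℕ → (ℕ →ᵇ ℝ) → ℝ, (∀ n, BaireOne (g n)) ∧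
        ∀ x, Tendsto (fun n => g n x) atTop (nhds (f x))) := by
  exact ⟨SB.f, SB.f_mem_Icc, SB.ssc_f, SB.baire_three, SB.not_baire_limit⟩
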